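/- On a path graph with vertex set {1,...,n}, given two token placements f and f' that place a distinguished set of k tokens at positions v_1 < v_2 < ... < v_k and w_1 < w_2 < ... < w_k respectively, with the i-th distinguished token (in order) being the same token in both placements, the minimum number of adjacent transpositions needed to transform f into f' while only information on distinguished tokens matters is exactly \sum_{i=1}^{k} |v_i - w_i|. -/

import Mathlib

/-- A single swap on the path with vertices `{0, …, n-1}` (edges `{i, i+1}`):
the placement `g` is obtained from `f` by exchanging the tokens on two adjacent vertices. -/
def AdjSwap {n : ℕ} {T : Type*} [DecidableEq T] (f g : Fin n ≃ T) : Prop :=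
  ∃ i j : Fin n, (i : ℕ) + 1 = (j : ℕ) ∧ g = (Equiv.swap i j).trans f

/-- `F 0 ~> F 1 ~> ⋯ ~> F l` is a swap sequence on the path. -/
def SwapSeq {n : ℕ} {T : Type*} [DecidableEq T] (l : ℕ) (F : ℕ → (Fin n ≃ T)) : Prop :=
  ∀ j, j < l → AdjSwap (F j) (F (j + 1))

namespace Stmt0Aux

open Finset

variable {n k : ℕ} {T : Type*} [DecidableEq T]

/-- counting function: number of distinguished tokens at positions `≤ m` -/
def cnt (u : Fin k → ℕ) (m : ℕ) : ℕ := (univ.filter fun i => u i ≤ m).card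

/-- exclusive-or condition -/
def xc (a b m : ℕ) : Prop := (a ≤ m ∧ ¬ b ≤ m) ∨ (b ≤ m ∧ ¬ a ≤ m)

instance (a b m : ℕ) : Decidable (xc a b m) := by unfold xc; infer_instance

lemma per_i (a b : ℕ) (ha : a < n) (hb : b < n) :
    ∑ m ∈ range n, (if xc a b m then 1 else 0) = Nat.dist a b := by
  rw [← Finset.card_filter]
  have : (range n).filter (xc a b) = Finset.Ico (min a b) (max a b) := by
    ext m; simp [xc, Finset.mem_filter, Finset.mem_range, Finset.mem_Ico]; omega
  rw [this, Nat.card_Ico, Nat.dist]; omega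

lemma per_m (v w : Fin k → ℕ) (hv : StrictMono v) (hw : StrictMono w) (m : ℕ) :
    Nat.dist (cnt v m) (cnt w m) = ∑ i : Fin k, (if xc (v i) (w i) m then 1 else 0) := by
  rw [← Finset.card_filter]
  set A := univ.filter fun i : Fin k => v i ≤ m with hA
  set B := univ.filter fun i : Fin k => w i ≤ m with hB
  have hcomp : A ⊆ B ∨ B ⊆ A := by
    by_contra h
    push_neg at h
    obtain ⟨h1, h2⟩ := h
    obtain ⟨a, haA, haB⟩ := Finset.not_subset.1 h1
    obtain ⟨b, hbB, hbA⟩ := Finset.not_subset.1 h2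
    simp [hA, hB] at haA haB hbB hbA
    have : a < b := hv.lt_iff_lt.1 (by omega)
    have : b < a := hw.lt_iff_lt.1 (by omega)
    omega
  rcases hcomp with h | h
  · have h' : ∀ i : Fin k, v i ≤ m → w i ≤ m := by
      intro i hi
      have := h (by simp [hA, hi] : i ∈ A)
      simpa [hB] using this
    have : univ.filter (fun i : Fin k => xc (v i) (w i) m) = B \ A := by
      ext i
      simp [hA, hB, xc]
      have := h' i
      omega
    rw [this, Finset.card_sdiff_of_subset h, cnt, cnt, ← hA, ← hB, Nat.dist]
    have := Finset.card_le_card h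
    omega
  · have h' : ∀ i : Fin k, w i ≤ m → v i ≤ m := by
      intro i hi
      have := h (by simp [hB, hi] : i ∈ B)
      simpa [hA] using this
    have : univ.filter (fun i : Fin k => xc (v i) (w i) m) = A \ B := by
      ext i
      simp [hA, hB, xc]
      have := h' i
      omega
    rw [this, Finset.card_sdiff_of_subset h, cnt, cnt, ← hA, ← hB, Nat.dist]
    have := Finset.card_le_card h
    omega

lemma phi_eq (v w : Fin k → ℕ) (hv : StrictMono v) (hw : StrictMono w)
    (hvn : ∀ i, v i < n) (hwn : ∀ i, w i < n) :
    ∑ m ∈ range n, Nat.dist (cnt v m) (cnt w m) = ∑ i : Fin k, Nat.dist (v i) (w i) := by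
  calc ∑ m ∈ range n, Nat.dist (cnt v m) (cnt w m)
      = ∑ m ∈ range n, ∑ i : Fin k, (if xc (v i) (w i) m then 1 else 0) :=
        Finset.sum_congr rfl fun m _ => per_m v w hv hw m
    _ = ∑ i : Fin k, ∑ m ∈ range n, (if xc (v i) (w i) m then 1 else 0) := Finset.sum_comm
    _ = ∑ i : Fin k, Nat.dist (v i) (w i) :=
        Finset.sum_congr rfl fun i _ => per_i _ _ (hvn i) (hwn i)

/-- position function of a placement -/
def pos (t : Fin k → T) (g : Fin n ≃ T) : Fin k → ℕ := fun i => (g.symm (t i) : ℕ)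

set_option linter.unusedSectionVars false in
lemma pos_swap (t : Fin k → T) (g : Fin n ≃ T) (p q : Fin n) (i : Fin k) :
    pos t ((Equiv.swap p q).trans g) i = ((Equiv.swap p q) (g.symm (t i)) : ℕ) := by
  simp [pos, Equiv.symm_trans_apply]

lemma swap_cnt (t : Fin k → T) (ht : Function.Injective t) (g : Fin n ≃ T) (p q : Fin n)
    (hpq : (p : ℕ) + 1 = (q : ℕ)) :
    ∑ m ∈ range n, Nat.dist (cnt (pos t g) m) (cnt (pos t ((Equiv.swap p q).trans g)) m) ≤ 1 := by
  set g' := (Equiv.swap p q).trans g with hg'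
  have hinj : Function.Injective (fun i => g.symm (t i)) := fun a b hab => ht (g.symm.injective hab)
  have key : ∀ m, Nat.dist (cnt (pos t g) m) (cnt (pos t g') m) ≤ if m = (p : ℕ) then 1 else 0 := by
    intro m
    by_cases hm : m = (p : ℕ)
    · subst hm
      simp only [if_pos rfl]
      set S := univ.filter fun i : Fin k => pos t g i ≤ (p:ℕ) with hS
      set S' := univ.filter fun i : Fin k => pos t g' i ≤ (p:ℕ) with hS'
      have hsub1 : (S' \ S).card ≤ 1 := by
        apply Finset.card_le_one.2
        intro a ha b hb
        simp [hS, hS'] at ha hb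
        have hmema : g.symm (t a) = q := by
          rcases ha with ⟨ha1, ha2⟩
          rw [pos_swap] at ha1
          by_contra hne
          by_cases hp : g.symm (t a) = p
          · rw [hp, Equiv.swap_apply_left] at ha1; unfold pos at ha2; omega
          · rw [Equiv.swap_apply_of_ne_of_ne hp hne] at ha1; unfold pos at ha2; omega
        have hmemb : g.symm (t b) = q := by
          rcases hb with ⟨hb1, hb2⟩
          rw [pos_swap] at hb1
          by_contra hne
          by_cases hp : g.symm (t b) = p
          · rw [hp, Equiv.swap_apply_left] at hb1; unfold pos at hb2; omega
          · rw [Equiv.swap_apply_of_ne_of_ne hp hne] at hb1; unfold pos at hb2; omega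
        exact hinj (hmema.trans hmemb.symm)
      have hsub2 : (S \ S').card ≤ 1 := by
        apply Finset.card_le_one.2
        intro a ha b hb
        simp [hS, hS'] at ha hb
        have hmema : g.symm (t a) = p := by
          rcases ha with ⟨ha1, ha2⟩
          rw [pos_swap] at ha2
          by_contra hne
          by_cases hq : g.symm (t a) = q
          · rw [hq, Equiv.swap_apply_right] at ha2; unfold pos at ha1; omega
          · rw [Equiv.swap_apply_of_ne_of_ne hne hq] at ha2; unfold pos at ha1; omega
        have hmemb : g.symm (t b) = p := by
          rcases hb with ⟨hb1, hb2⟩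
          rw [pos_swap] at hb2
          by_contra hne
          by_cases hq : g.symm (t b) = q
          · rw [hq, Equiv.swap_apply_right] at hb2; unfold pos at hb1; omega
          · rw [Equiv.swap_apply_of_ne_of_ne hne hq] at hb2; unfold pos at hb1; omega
        exact hinj (hmema.trans hmemb.symm)
      have h1 : S.card ≤ S'.card + 1 := by
        have : S ⊆ S' ∪ (S \ S') := by intro x hx; simp [Finset.mem_union, Finset.mem_sdiff]; tauto
        calc S.card ≤ (S' ∪ (S \ S')).card := Finset.card_le_card this
          _ ≤ S'.card + (S \ S').card := Finset.card_union_le _ _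
          _ ≤ S'.card + 1 := by omega
      have h2 : S'.card ≤ S.card + 1 := by
        have : S' ⊆ S ∪ (S' \ S) := by intro x hx; simp [Finset.mem_union, Finset.mem_sdiff]; tauto
        calc S'.card ≤ (S ∪ (S' \ S)).card := Finset.card_le_card this
          _ ≤ S.card + (S' \ S).card := Finset.card_union_le _ _
          _ ≤ S.card + 1 := by omega
      simp [cnt, ← hS, ← hS', Nat.dist]; omega
    · simp only [if_neg hm]
      have : cnt (pos t g') m = cnt (pos t g) m := by
        unfold cnt
        congr 1
        ext i
        simp only [Finset.mem_filter, Finset.mem_univ, true_and]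
        rw [pos_swap]
        by_cases hp : g.symm (t i) = p
        · rw [hp, Equiv.swap_apply_left]; unfold pos; rw [hp]; omega
        · by_cases hq : g.symm (t i) = q
          · rw [hq, Equiv.swap_apply_right]; unfold pos; rw [hq]; omega
          · rw [Equiv.swap_apply_of_ne_of_ne hp hq]; rfl
      rw [this, Nat.dist_self]
  calc ∑ m ∈ range n, Nat.dist (cnt (pos t g) m) (cnt (pos t g') m)
      ≤ ∑ m ∈ range n, if m = (p : ℕ) then 1 else 0 := Finset.sum_le_sum fun m _ => key m
    _ = 1 := by rw [Finset.sum_ite_eq' (range n) (p:ℕ) (fun _ => 1)]; simp [p.isLt]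

lemma one_step (t : Fin k → T) (ht : Function.Injective t) (f f' : Fin n ≃ T)
    (hv : StrictMono (pos t f)) (hw : StrictMono (pos t f')) (D : ℕ)
    (hsum : ∑ i : Fin k, Nat.dist (pos t f i) (pos t f' i) = D + 1) :
    ∃ g : Fin n ≃ T, AdjSwap f g ∧ StrictMono (pos t g) ∧
      ∑ i : Fin k, Nat.dist (pos t g i) (pos t f' i) = D := by
  set v := pos t f with hvdef
  set w := pos t f' with hwdef
  have hvn : ∀ r, v r < n := fun r => (f.symm (t r)).isLt
  have hwn : ∀ r, w r < n := fun r => (f'.symm (t r)).isLt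
  have hex : ∃ i, v i ≠ w i := by
    by_contra h
    push_neg at h
    have : ∑ i : Fin k, Nat.dist (v i) (w i) = 0 :=
      Finset.sum_eq_zero fun i _ => by rw [h i, Nat.dist_self]
    omega
  have hfinj : Function.Injective (fun r => f.symm (t r)) :=
    fun a b hab => ht (f.symm.injective hab)
  by_cases hcase : ∃ i, w i < v i
  · -- move a token left
    set s := univ.filter (fun i : Fin k => w i < v i) with hsdef
    have hs : s.Nonempty := by
      obtain ⟨i, hi⟩ := hcase
      exact ⟨i, by simp [hsdef, hi]⟩
    set i := s.min' hs with hidef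
    have hi : w i < v i := (Finset.mem_filter.1 (s.min'_mem hs)).2
    have hminimal : ∀ r, r < i → v r ≤ w r := by
      intro r hr
      by_contra hvw
      have hrs : r ∈ s := by simp [hsdef]; omega
      exact absurd (s.min'_le r hrs) (not_le.2 hr)
    have hpn : v i - 1 < n := by have := hvn i; omega
    set p : Fin n := ⟨v i - 1, hpn⟩ with hpdef
    set q : Fin n := f.symm (t i) with hqdef
    have hqv : (q : ℕ) = v i := rfl
    have hpq : (p : ℕ) + 1 = (q : ℕ) := by rw [hqv]; simp [hpdef]; omega
    have no_p : ∀ r, f.symm (t r) ≠ p := by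
      intro r hrp
      have hval : v r = v i - 1 := congrArg Fin.val hrp
      have hrlt : r < i := hv.lt_iff_lt.1 (by omega)
      have h1 := hminimal r hrlt
      have h2 : w r < w i := hw hrlt
      omega
    have gpos : ∀ r, pos t ((Equiv.swap p q).trans f) r = if r = i then v i - 1 else v r := by
      intro r
      rw [pos_swap]
      by_cases hr : r = i
      · rw [hr, ← hqdef, Equiv.swap_apply_right, if_pos rfl]
      · have h1 : f.symm (t r) ≠ q := fun h => hr (hfinj h)
        rw [Equiv.swap_apply_of_ne_of_ne (no_p r) h1, if_neg hr]
        rfl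
    refine ⟨(Equiv.swap p q).trans f, ⟨p, q, hpq, rfl⟩, ?_, ?_⟩
    · intro a b hab
      have hab' : v a < v b := hv hab
      rw [gpos a, gpos b]
      split_ifs with h1 h2 h2
      · exact absurd (h1.trans h2.symm) (ne_of_lt hab)
      · rw [h1] at hab'; omega
      · rw [h2] at hab'
        have : v a ≠ v i - 1 := fun h => no_p a (Fin.ext h)
        omega
      · omega
    · have e2 : (∑ r ∈ univ.erase i, Nat.dist (v r) (w r)) + Nat.dist (v i) (w i)
          = ∑ r : Fin k, Nat.dist (v r) (w r) :=
        Finset.sum_erase_add univ _ (mem_univ i)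
      have e3 : (∑ r ∈ univ.erase i, Nat.dist (pos t ((Equiv.swap p q).trans f) r) (w r))
            + Nat.dist (pos t ((Equiv.swap p q).trans f) i) (w i)
          = ∑ r : Fin k, Nat.dist (pos t ((Equiv.swap p q).trans f) r) (w r) :=
        Finset.sum_erase_add univ _ (mem_univ i)
      have e1 : ∑ r ∈ univ.erase i, Nat.dist (pos t ((Equiv.swap p q).trans f) r) (w r)
          = ∑ r ∈ univ.erase i, Nat.dist (v r) (w r) :=
        Finset.sum_congr rfl fun r hr => by rw [gpos r, if_neg (Finset.mem_erase.1 hr).1]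
      have e4 : pos t ((Equiv.swap p q).trans f) i = v i - 1 := by rw [gpos i, if_pos rfl]
      have d1 : Nat.dist (v i - 1) (w i) + 1 = Nat.dist (v i) (w i) := by
        simp [Nat.dist]; omega
      rw [e4] at e3
      omega
  · -- move a token right
    push_neg at hcase
    obtain ⟨i0, hi0⟩ := hex
    set s := univ.filter (fun i : Fin k => v i < w i) with hsdef
    have hs : s.Nonempty := ⟨i0, by simp [hsdef]; have := hcase i0; omega⟩
    set i := s.max' hs with hidef
    have hi : v i < w i := (Finset.mem_filter.1 (s.max'_mem hs)).2
    have hmaximal : ∀ r, i < r → w r ≤ v r := by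
      intro r hr
      by_contra hvw
      have hrs : r ∈ s := by simp [hsdef]; omega
      exact absurd (s.le_max' r hrs) (not_le.2 hr)
    have hqn : v i + 1 < n := by have := hwn i; omega
    set q : Fin n := ⟨v i + 1, hqn⟩ with hqdef
    set p : Fin n := f.symm (t i) with hpdef
    have hpv : (p : ℕ) = v i := rfl
    have hpq : (p : ℕ) + 1 = (q : ℕ) := by rw [hpv]
    have no_q : ∀ r, f.symm (t r) ≠ q := by
      intro r hrq
      have hval : v r = v i + 1 := congrArg Fin.val hrq
      have hrgt : i < r := hv.lt_iff_lt.1 (by omega)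
      have h1 := hmaximal r hrgt
      have h2 : w i < w r := hw hrgt
      omega
    have gpos : ∀ r, pos t ((Equiv.swap p q).trans f) r = if r = i then v i + 1 else v r := by
      intro r
      rw [pos_swap]
      by_cases hr : r = i
      · rw [hr, ← hpdef, Equiv.swap_apply_left, if_pos rfl]
      · have h1 : f.symm (t r) ≠ p := fun h => hr (hfinj h)
        rw [Equiv.swap_apply_of_ne_of_ne h1 (no_q r), if_neg hr]
        rfl
    refine ⟨(Equiv.swap p q).trans f, ⟨p, q, hpq, rfl⟩, ?_, ?_⟩
    · intro a b hab
      have hab' : v a < v b := hv hab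
      rw [gpos a, gpos b]
      split_ifs with h1 h2 h2
      · exact absurd (h1.trans h2.symm) (ne_of_lt hab)
      · rw [h1] at hab'
        have : v b ≠ v i + 1 := fun h => no_q b (Fin.ext h)
        omega
      · rw [h2] at hab'; omega
      · omega
    · have e2 : (∑ r ∈ univ.erase i, Nat.dist (v r) (w r)) + Nat.dist (v i) (w i)
          = ∑ r : Fin k, Nat.dist (v r) (w r) :=
        Finset.sum_erase_add univ _ (mem_univ i)
      have e3 : (∑ r ∈ univ.erase i, Nat.dist (pos t ((Equiv.swap p q).trans f) r) (w r))
            + Nat.dist (pos t ((Equiv.swap p q).trans f) i) (w i)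
          = ∑ r : Fin k, Nat.dist (pos t ((Equiv.swap p q).trans f) r) (w r) :=
        Finset.sum_erase_add univ _ (mem_univ i)
      have e1 : ∑ r ∈ univ.erase i, Nat.dist (pos t ((Equiv.swap p q).trans f) r) (w r)
          = ∑ r ∈ univ.erase i, Nat.dist (v r) (w r) :=
        Finset.sum_congr rfl fun r hr => by rw [gpos r, if_neg (Finset.mem_erase.1 hr).1]
      have e4 : pos t ((Equiv.swap p q).trans f) i = v i + 1 := by rw [gpos i, if_pos rfl]
      have d1 : Nat.dist (v i + 1) (w i) + 1 = Nat.dist (v i) (w i) := by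
        simp [Nat.dist]; omega
      rw [e4] at e3
      omega

lemma build_seq (t : Fin k → T) (ht : Function.Injective t) (f' : Fin n ≃ T)
    (hw : StrictMono (pos t f')) :
    ∀ D (f : Fin n ≃ T), StrictMono (pos t f) →
      ∑ i : Fin k, Nat.dist (pos t f i) (pos t f' i) = D →
      ∃ F : ℕ → (Fin n ≃ T), SwapSeq D F ∧ F 0 = f ∧
        ∀ i, (F D).symm (t i) = f'.symm (t i) := by
  intro D
  induction D with
  | zero =>
    intro f hv hsum
    refine ⟨fun _ => f, fun j hj => absurd hj (Nat.not_lt_zero j), rfl, fun i => ?_⟩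
    have h0 : Nat.dist (pos t f i) (pos t f' i) = 0 :=
      Finset.sum_eq_zero_iff.1 hsum i (mem_univ i)
    exact Fin.ext (Nat.eq_of_dist_eq_zero h0)
  | succ D ih =>
    intro f hv hsum
    obtain ⟨g, ⟨p, q, hpq, hgeq⟩, hg, hgsum⟩ := one_step t ht f f' hv hw D hsum
    obtain ⟨F', hF', hF'0, hF'D⟩ := ih g hg hgsum
    refine ⟨fun j => if j = 0 then f else F' (j - 1), ?_, by simp, ?_⟩
    · intro j hj
      match j with
      | 0 =>
        show AdjSwap (if (0:ℕ) = 0 then f else F' (0 - 1)) (if (1:ℕ) = 0 then f else F' (1 - 1))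
        rw [if_pos rfl, if_neg Nat.one_ne_zero]
        show AdjSwap f (F' 0)
        rw [hF'0]
        exact ⟨p, q, hpq, hgeq⟩
      | Nat.succ m =>
        show AdjSwap (if m + 1 = 0 then f else F' (m + 1 - 1))
          (if m + 1 + 1 = 0 then f else F' (m + 1 + 1 - 1))
        rw [if_neg (Nat.succ_ne_zero m), if_neg (Nat.succ_ne_zero (m+1))]
        show AdjSwap (F' m) (F' (m + 1))
        exact hF' m (by omega)
    · intro i
      show (if D + 1 = 0 then f else F' (D + 1 - 1)).symm (t i) = f'.symm (t i)
      rw [if_neg (Nat.succ_ne_zero D)]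
      exact hF'D i

end Stmt0Aux

open Stmt0Aux Finset in
/-- on a path, if `f` and `f'` place the distinguished tokens `t 0, …, t (k-1)`
at increasing positions `v 0 < ⋯ < v (k-1)` resp. `w 0 < ⋯ < w (k-1)` (same left-to-right
order of distinguished tokens in both placements), then the minimum length of a swap
sequence transforming `f` into `f'` up to the information on distinguished tokens
(i.e. between placements signature-equivalent to `f` and to `f'`) is exactly
`∑ i |v i - w i|`. -/
theorem stmt0 {n k : ℕ} {T : Type*} [DecidableEq T]
    (t : Fin k → T) (ht : Function.Injective t)
    (f f' : Fin n ≃ T)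
    (hf : StrictMono fun i => f.symm (t i))
    (hf' : StrictMono fun i => f'.symm (t i)) :
    IsLeast {l : ℕ | ∃ F : ℕ → (Fin n ≃ T), SwapSeq l F ∧
        (∀ i, (F 0).symm (t i) = f.symm (t i)) ∧
        (∀ i, (F l).symm (t i) = f'.symm (t i))}
      (∑ i : Fin k, Nat.dist (f.symm (t i) : ℕ) (f'.symm (t i) : ℕ)) := by
  have hv : StrictMono (pos t f) := fun a b h => hf h
  have hw : StrictMono (pos t f') := fun a b h => hf' h
  constructor
  · obtain ⟨F, hF, hF0, hFD⟩ :=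
      build_seq t ht f' hw (∑ i : Fin k, Nat.dist (pos t f i) (pos t f' i)) f hv rfl
    exact ⟨F, hF, fun i => by rw [hF0], hFD⟩
  · intro l hl
    obtain ⟨F, hF, h0, hl'⟩ := hl
    have step : ∀ j, j < l →
        (∑ m ∈ range n, Nat.dist (cnt (pos t (F j)) m) (cnt (pos t f') m))
        ≤ 1 + ∑ m ∈ range n, Nat.dist (cnt (pos t (F (j+1))) m) (cnt (pos t f') m) := by
      intro j hj
      obtain ⟨p, q, hpq, heq⟩ := hF j hj
      have tri : ∀ m, Nat.dist (cnt (pos t (F j)) m) (cnt (pos t f') m)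
          ≤ Nat.dist (cnt (pos t (F j)) m) (cnt (pos t (F (j+1))) m)
            + Nat.dist (cnt (pos t (F (j+1))) m) (cnt (pos t f') m) :=
        fun m => Nat.dist.triangle_inequality _ _ _
      have hsw : ∑ m ∈ range n,
          Nat.dist (cnt (pos t (F j)) m) (cnt (pos t (F (j+1))) m) ≤ 1 := by
        rw [heq]
        exact swap_cnt t ht (F j) p q hpq
      calc ∑ m ∈ range n, Nat.dist (cnt (pos t (F j)) m) (cnt (pos t f') m)
          ≤ ∑ m ∈ range n, (Nat.dist (cnt (pos t (F j)) m) (cnt (pos t (F (j+1))) m)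
              + Nat.dist (cnt (pos t (F (j+1))) m) (cnt (pos t f') m)) :=
            Finset.sum_le_sum fun m _ => tri m
        _ = (∑ m ∈ range n, Nat.dist (cnt (pos t (F j)) m) (cnt (pos t (F (j+1))) m))
            + ∑ m ∈ range n, Nat.dist (cnt (pos t (F (j+1))) m) (cnt (pos t f') m) :=
            Finset.sum_add_distrib
        _ ≤ 1 + ∑ m ∈ range n, Nat.dist (cnt (pos t (F (j+1))) m) (cnt (pos t f') m) :=
            Nat.add_le_add_right hsw _
    have main : ∀ j, j ≤ l →
        (∑ m ∈ range n, Nat.dist (cnt (pos t (F 0)) m) (cnt (pos t f') m))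
        ≤ j + ∑ m ∈ range n, Nat.dist (cnt (pos t (F j)) m) (cnt (pos t f') m) := by
      intro j
      induction j with
      | zero => intro _; simp
      | succ j ihj =>
        intro hj
        have h1 := ihj (by omega)
        have h2 := step j (by omega)
        omega
    have hend : pos t (F l) = pos t f' := funext fun i => by rw [pos, hl' i]; rfl
    have hstart : pos t (F 0) = pos t f := funext fun i => by rw [pos, h0 i]; rfl
    have hzero : ∑ m ∈ range n, Nat.dist (cnt (pos t (F l)) m) (cnt (pos t f') m) = 0 := by
      rw [hend]
      exact Finset.sum_eq_zero fun m _ => Nat.dist_self _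
    have hid : ∑ m ∈ range n, Nat.dist (cnt (pos t f) m) (cnt (pos t f') m)
        = ∑ i : Fin k, Nat.dist (pos t f i) (pos t f' i) :=
      phi_eq _ _ hv hw (fun i => (f.symm (t i)).isLt) (fun i => (f'.symm (t i)).isLt)
    have hmain := main l le_rfl
    rw [hstart, hzero, hid] at hmain
    simpa [pos] using hmain
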